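/- Let V be a finite-dimensional real inner product space, K : V → V a symmetric positive semidefinite linear operator, W₊, W₋ : V → ℝ convex differentiable functions, ε, σ, τ > 0. Suppose uⁿ⁺¹, wⁿ⁺¹ ∈ V satisfy uⁿ⁺¹ + τσ·K wⁿ⁺¹ = uⁿ and ε·K uⁿ⁺¹ + ε⁻¹(∇W₊(uⁿ⁺¹) − ∇W₋(uⁿ)) = wⁿ⁺¹. Then E(uⁿ⁺¹) ≤ E(uⁿ), where E(v) = (ε/2)⟨K v, v⟩ + ε⁻¹(W₊(v) − W₋(v)). -/

import Mathlib

open scoped RealInnerProductSpace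

open Filter Topology

lemma tangent_le {V : Type*} [NormedAddCommGroup V] [InnerProductSpace ℝ V]
    [FiniteDimensional ℝ V] {f : V → ℝ} {g x : V}
    (hconv : ConvexOn ℝ Set.univ f) (hg : HasGradientAt f g x) (y : V) :
    f x + ⟪g, y - x⟫ ≤ f y := by
  set φ : ℝ → ℝ := fun t => f (x + t • (y - x)) with hφ
  have hc : HasDerivAt (fun t : ℝ => x + t • (y - x)) (y - x) 0 := by
    simpa using ((hasDerivAt_id (0:ℝ)).smul_const (y - x)).const_add x
  have hderiv : HasDerivAt φ ⟪g, y - x⟫ 0 := by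
    have h0 : (fun t : ℝ => x + t • (y - x)) 0 = x := by simp
    have := (h0 ▸ hg.hasFDerivAt : HasFDerivAt f _ _).comp_hasDerivAt 0 hc
    exact this
  have htend : Tendsto (slope φ 0) (𝓝[>] 0) (𝓝 ⟪g, y - x⟫) :=
    (hasDerivAt_iff_tendsto_slope.mp hderiv).mono_left
      (nhdsWithin_mono _ fun t ht => ne_of_gt ht)
  have hev : ∀ᶠ t in 𝓝[>] (0:ℝ), slope φ 0 t ≤ f y - f x := by
    filter_upwards [Ioc_mem_nhdsGT_of_mem (Set.left_mem_Ico.mpr one_pos)] with t ht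
    have hcomb : φ t ≤ (1 - t) * f x + t * f y := by
      have := hconv.2 (Set.mem_univ x) (Set.mem_univ y)
        (by linarith [ht.2] : (0:ℝ) ≤ 1 - t) ht.1.le (by ring)
      have hpt : (1 - t) • x + t • y = x + t • (y - x) := by
        module
      simpa [φ, hpt] using this
    have hφ0 : φ 0 = f x := by simp [φ]
    rw [slope_def_field, sub_zero, div_le_iff₀ ht.1]
    calc φ t - φ 0 ≤ (1 - t) * f x + t * f y - f x := by linarith
    _ = (f y - f x) * t := by ring
  have := le_of_tendsto htend hev
  linarith

theorem stmt_5 {V : Type*} [NormedAddCommGroup V] [InnerProductSpace ℝ V]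
    [FiniteDimensional ℝ V]
    (K : V →ₗ[ℝ] V)
    (hKsym : ∀ x y : V, ⟪K x, y⟫ = ⟪x, K y⟫)
    (hKpos : ∀ v : V, 0 ≤ ⟪K v, v⟫)
    (Wp Wm : V → ℝ) (gWp gWm : V → V)
    (hWpconv : ConvexOn ℝ Set.univ Wp) (hWmconv : ConvexOn ℝ Set.univ Wm)
    (hWp : ∀ x, HasGradientAt Wp (gWp x) x)
    (hWm : ∀ x, HasGradientAt Wm (gWm x) x)
    (ε σ τ : ℝ) (hε : 0 < ε) (hσ : 0 < σ) (hτ : 0 < τ)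
    (E : V → ℝ)
    (hE : ∀ v, E v = (ε/2) * ⟪K v, v⟫ + ε⁻¹ * (Wp v - Wm v))
    (u0 u1 w1 : V)
    (h1 : u1 + (τ * σ) • K w1 = u0)
    (h2 : ε • K u1 + ε⁻¹ • (gWp u1 - gWm u0) = w1) :
    E u1 ≤ E u0 := by
  set d : V := u1 - u0 with hd
  set a := ⟪K u1, u1⟫ with ha
  set b := ⟪K u0, u0⟫ with hb
  set c := ⟪K u1, u0⟫ with hc
  set p := ⟪gWp u1, d⟫ with hp
  set m := ⟪gWm u0, d⟫ with hm
  set q := ⟪K w1, w1⟫ with hq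
  -- convexity inequalities
  have f1 : Wp u1 - Wp u0 ≤ p := by
    have := tangent_le hWpconv (hWp u1) u0
    have hswap : ⟪gWp u1, u0 - u1⟫ = -p := by
      rw [hp, hd, ← inner_neg_right]; congr 1; abel
    linarith [hswap ▸ this]
  have f2 : Wm u0 - Wm u1 ≤ -m := by
    have := tangent_le hWmconv (hWm u0) u1
    simp only [hm, hd] at this ⊢
    linarith
  -- positivity
  have hKd : 0 ≤ ⟪K d, d⟫ := hKpos d
  have hqpos : 0 ≤ q := hKpos w1
  -- expansion of ⟪K d, d⟫
  have hc' : ⟪K u0, u1⟫ = c := by rw [hc, hKsym u0 u1, real_inner_comm]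
  have f3 : ⟪K d, d⟫ = a - 2 * c + b := by
    rw [hd, map_sub, inner_sub_left, inner_sub_right, inner_sub_right, hc']
    ring_nf
    rw [ha, hb, hc]; ring
  -- inner products with w1
  have f4 : ⟪w1, d⟫ = ε * (a - c) + ε⁻¹ * (p - m) := by
    rw [← h2, inner_add_left, real_inner_smul_left, real_inner_smul_left,
      inner_sub_left, hd, inner_sub_right, hp, hm, ha, hc, hd]
  have hdw : d = -((τ * σ) • K w1) := by
    rw [hd, ← h1]; abel
  have f5 : ⟪w1, d⟫ = -(τ * σ) * q := by
    rw [hdw, inner_neg_right, real_inner_smul_right, hq, real_inner_comm]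
    ring
  -- combine
  have key : ε * (a - c) + ε⁻¹ * (p - m) = -(τ * σ) * q := by rw [← f4, f5]
  have hεi : 0 < ε⁻¹ := inv_pos.mpr hε
  have hWsum : ε⁻¹ * ((Wp u1 - Wm u1) - (Wp u0 - Wm u0)) ≤ ε⁻¹ * (p - m) := by
    apply mul_le_mul_of_nonneg_left _ hεi.le
    linarith
  have hquad : (ε/2) * a - (ε/2) * b ≤ ε * (a - c) := by
    nlinarith [f3 ▸ hKd]
  have hqterm : 0 ≤ (τ * σ) * q := mul_nonneg (by positivity) hqpos
  rw [hE u1, hE u0]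
  nlinarith
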